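/- arXiv:1608.04319 — 2 statements merged into one kernel-verified Lean document; each statement's English description precedes it below -/
import Mathlib

section
/- Let G be a finite simple graph with n ≥ 1 vertices and m ≥ 1 edges. Then, as real numbers, NK(G^{---}) ≤ ((m+n-1) - 4m/n)^n · ((m+n-1) - M1(G)/m)^m, with equality if and only if G is regular. -/
open Finset

variable {V : Type*}

/-- The Narumi–Katayama index: the product of the degrees of all vertices. -/
def NK {W : Type*} [Fintype W] (H : SimpleGraph W) [DecidableRel H.Adj] : ℕ :=
  ∏ v, H.degree v

/-- The first Zagreb index: the sum of the squares of the degrees. -/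
def M1 [Fintype V] (G : SimpleGraph V) [DecidableRel G.Adj] : ℕ :=
  ∑ v, (G.degree v) ^ 2

/-- The multiplicative sum Zagreb index: the product over the edges of `G` of the
sum of the degrees of the two endpoints. -/
def Pi1Star [Fintype V] [DecidableEq V] (G : SimpleGraph V) [DecidableRel G.Adj] : ℕ :=
  ∏ e ∈ G.edgeFinset,
    Sym2.lift ⟨fun u v => G.degree u + G.degree v, fun u v => by simp [Nat.add_comm]⟩ e

/-- A generic transformation graph on the vertex set `V(G) ∪ E(G)`, built from a
symmetric irreflexive relation `Rvv` between vertices, a symmetric irreflexive relation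
`Ree` between edges, and an incidence relation `Rve` between vertices and edges. -/
def transGraph (G : SimpleGraph V) (Rvv : V → V → Prop) (Ree : Sym2 V → Sym2 V → Prop)
    (Rve : V → Sym2 V → Prop)
    (hvv : Symmetric Rvv) (hvv' : Irreflexive Rvv)
    (hee : Symmetric Ree) (hee' : Irreflexive Ree) :
    SimpleGraph (V ⊕ G.edgeSet) where
  Adj a b :=
    match a, b with
    | Sum.inl u, Sum.inl v => Rvv u v
    | Sum.inr e, Sum.inr f => Ree e.1 f.1
    | Sum.inl u, Sum.inr e => Rve u e.1
    | Sum.inr e, Sum.inl u => Rve u e.1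
  symm := by
    constructor
    rintro (u | e) (v | f) h
    · exact hvv h
    · exact h
    · exact h
    · exact hee h
  loopless := by
    constructor
    rintro (u | e) h
    · exact hvv' u h
    · exact hee' e.1 h

instance transGraph.instDecidableAdj (G : SimpleGraph V) (Rvv : V → V → Prop)
    (Ree : Sym2 V → Sym2 V → Prop) (Rve : V → Sym2 V → Prop)
    (h1 : Symmetric Rvv) (h2 : Irreflexive Rvv) (h3 : Symmetric Ree) (h4 : Irreflexive Ree)
    [DecidableRel Rvv] [DecidableRel Ree] [∀ u e, Decidable (Rve u e)] :
    DecidableRel (transGraph G Rvv Ree Rve h1 h2 h3 h4).Adj := fun a b =>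
  match a, b with
  | Sum.inl u, Sum.inl v => inferInstanceAs (Decidable (Rvv u v))
  | Sum.inr e, Sum.inr f => inferInstanceAs (Decidable (Ree e.1 f.1))
  | Sum.inl u, Sum.inr e => inferInstanceAs (Decidable (Rve u e.1))
  | Sum.inr e, Sum.inl u => inferInstanceAs (Decidable (Rve u e.1))

/-- Two edges (as elements of `Sym2 V`) are adjacent: distinct and sharing an endpoint. -/
abbrev shareRel : Sym2 V → Sym2 V → Prop := fun e f => e ≠ f ∧ ∃ w, w ∈ e ∧ w ∈ f

lemma shareRel_symm : Symmetric (shareRel (V := V)) :=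
  fun _ _ h => ⟨h.1.symm, h.2.imp fun _ hw => ⟨hw.2, hw.1⟩⟩

lemma shareRel_irrefl : Irreflexive (shareRel (V := V)) := fun _ h => h.1 rfl

/-- Two edges are "non-adjacent": distinct and sharing no endpoint. -/
abbrev coshareRel : Sym2 V → Sym2 V → Prop := fun e f => e ≠ f ∧ ∀ w, w ∈ e → w ∉ f

lemma coshareRel_symm : Symmetric (coshareRel (V := V)) :=
  fun _ _ h => ⟨h.1.symm, fun w hf he => h.2 w he hf⟩

lemma coshareRel_irrefl : Irreflexive (coshareRel (V := V)) := fun _ h => h.1 rfl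

/-- Non-adjacency of distinct vertices. -/
abbrev coAdj (G : SimpleGraph V) : V → V → Prop := fun u v => u ≠ v ∧ ¬ G.Adj u v

lemma coAdj_symm (G : SimpleGraph V) : Symmetric (coAdj G) :=
  fun _ _ h => ⟨h.1.symm, fun ha => h.2 ha.symm⟩

lemma coAdj_irrefl (G : SimpleGraph V) : Irreflexive (coAdj G) := fun _ h => h.1 rfl

variable [Fintype V] [DecidableEq V]

/-- The total transformation graph `G^{---}`. -/
abbrev Gmmm (G : SimpleGraph V) [DecidableRel G.Adj] : SimpleGraph (V ⊕ G.edgeSet) :=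
  transGraph G (coAdj G) coshareRel (fun u e => u ∉ e)
    (coAdj_symm G) (coAdj_irrefl G) coshareRel_symm coshareRel_irrefl

set_option linter.unusedSectionVars false

section Aux
variable (G : SimpleGraph V) [DecidableRel G.Adj]

lemma card_edge_subtype : Fintype.card G.edgeSet = G.edgeFinset.card :=
  (Set.toFinset_card _).symm

lemma card_filter_mem (v : V) :
    Fintype.card {f : G.edgeSet // v ∈ f.1} = G.degree v := by
  rw [Fintype.card_subtype, ← SimpleGraph.card_incidenceFinset_eq_degree]
  apply Finset.card_bij (fun f _ => f.1)
  · intro f hf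
    rw [SimpleGraph.mem_incidenceFinset]
    exact ⟨f.2, (Finset.mem_filter.1 hf).2⟩
  · intro f _ g _ h
    exact Subtype.ext h
  · intro e he
    rw [SimpleGraph.mem_incidenceFinset] at he
    exact ⟨⟨e, he.1⟩, Finset.mem_filter.2 ⟨Finset.mem_univ _, he.2⟩, rfl⟩

lemma card_split' {α : Type*} [Fintype α] (P Q : α → Prop) [DecidablePred P] [DecidablePred Q]
    (h : ∀ x, Q x ↔ ¬ P x) :
    Fintype.card {x // P x} + Fintype.card {x // Q x} = Fintype.card α := by
  rw [Fintype.card_subtype, Fintype.card_subtype]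
  have : (univ.filter Q) = (univ.filter (fun x => ¬ P x)) := by
    ext x; simp [h]
  rw [this]
  simpa using Finset.card_filter_add_card_filter_not (s := univ) (p := P)

lemma deg_inl (u : V) :
    (Gmmm G).degree (Sum.inl u) + 2 * G.degree u + 1 = G.edgeFinset.card + Fintype.card V := by
  classical
  have hdeg : (Gmmm G).degree (Sum.inl u) =
      Fintype.card {v : V // u ≠ v ∧ ¬ G.Adj u v} +
      Fintype.card {f : G.edgeSet // u ∉ f.1} := by
    rw [← SimpleGraph.card_neighborSet_eq_degree]
    refine (Fintype.card_congr' (β := {c // (Gmmm G).Adj (Sum.inl u) c}) rfl).trans ?_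
    rw [Fintype.card_congr (Equiv.subtypeSum (p := fun c => (Gmmm G).Adj (Sum.inl u) c)),
      Fintype.card_sum]
    congr 1 <;> exact Fintype.card_congr' rfl
  have h1 : Fintype.card {v : V // u ≠ v ∧ ¬ G.Adj u v} + (G.degree u + 1) =
      Fintype.card V := by
    have hsplit := card_split' (fun v : V => u ≠ v ∧ ¬ G.Adj u v)
      (fun v : V => ¬(u ≠ v ∧ ¬ G.Adj u v)) (fun x => Iff.rfl)
    beta_reduce at hsplit
    have hc : Fintype.card {v : V // ¬(u ≠ v ∧ ¬ G.Adj u v)} = G.degree u + 1 := by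
      rw [Fintype.card_subtype]
      have : (univ.filter (fun v : V => ¬(u ≠ v ∧ ¬ G.Adj u v))) =
          insert u (G.neighborFinset u) := by
        ext v
        simp only [Finset.mem_filter, Finset.mem_univ, true_and, Finset.mem_insert,
          SimpleGraph.mem_neighborFinset, not_and_or, not_not, ne_eq]
        constructor
        · rintro (h | h)
          · exact Or.inl h.symm
          · exact Or.inr h
        · rintro (h | h)
          · exact Or.inl h.symm
          · exact Or.inr h
      rw [this, Finset.card_insert_of_notMem (by simp),
        SimpleGraph.card_neighborFinset_eq_degree]
    omega
  have h2 : Fintype.card {f : G.edgeSet // u ∉ f.1} + G.degree u = G.edgeFinset.card := by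
    have hsplit := card_split' (fun f : G.edgeSet => u ∈ f.1)
      (fun f : G.edgeSet => u ∉ f.1) (fun x => Iff.rfl)
    beta_reduce at hsplit
    rw [card_filter_mem, card_edge_subtype] at hsplit
    omega
  omega

lemma deg_inr (a b : V) (he : s(a,b) ∈ G.edgeSet) :
    (Gmmm G).degree (Sum.inr ⟨s(a,b), he⟩) + (G.degree a + G.degree b) + 1 =
      G.edgeFinset.card + Fintype.card V := by
  classical
  have hab : a ≠ b := (G.mem_edgeSet.1 he).ne
  have hdeg : (Gmmm G).degree (Sum.inr ⟨s(a,b), he⟩) =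
      Fintype.card {v : V // v ∉ s(a,b)} +
      Fintype.card {f : G.edgeSet // coshareRel s(a,b) f.1} := by
    rw [← SimpleGraph.card_neighborSet_eq_degree]
    refine (Fintype.card_congr'
      (β := {c // (Gmmm G).Adj (Sum.inr ⟨s(a,b), he⟩) c}) rfl).trans ?_
    rw [Fintype.card_congr
      (Equiv.subtypeSum (p := fun c => (Gmmm G).Adj (Sum.inr ⟨s(a,b), he⟩) c)),
      Fintype.card_sum]
    congr 1 <;> exact Fintype.card_congr' rfl
  have h1 : Fintype.card {v : V // v ∉ s(a,b)} + 2 = Fintype.card V := by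
    have hsplit := card_split' (fun v : V => v ∈ s(a,b))
      (fun v : V => v ∉ s(a,b)) (fun x => Iff.rfl)
    beta_reduce at hsplit
    have hc : Fintype.card {v : V // v ∈ s(a,b)} = 2 := by
      rw [Fintype.card_subtype]
      have : (univ.filter (fun v : V => v ∈ s(a,b))) = {a, b} := by
        ext v; simp [Sym2.mem_iff]
      rw [this, Finset.card_insert_of_notMem (by simp [hab]), Finset.card_singleton]
    omega
  have h2 : Fintype.card {f : G.edgeSet // coshareRel s(a,b) f.1} +
      (G.degree a + G.degree b) = G.edgeFinset.card + 1 := by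
    have hsplit := card_split' (fun f : G.edgeSet => coshareRel s(a,b) f.1)
      (fun f : G.edgeSet => ¬ coshareRel s(a,b) f.1) (fun x => Iff.rfl)
    beta_reduce at hsplit
    rw [card_edge_subtype] at hsplit
    have hneg : Fintype.card {f : G.edgeSet // ¬ coshareRel s(a,b) f.1} + 1 =
        G.degree a + G.degree b := by
      rw [Fintype.card_subtype]
      have hfilt : (univ.filter (fun f : G.edgeSet => ¬ coshareRel s(a,b) f.1)) =
          (univ.filter (fun f : G.edgeSet => a ∈ f.1)) ∪
          (univ.filter (fun f : G.edgeSet => b ∈ f.1)) := by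
        ext f
        simp only [Finset.mem_filter, Finset.mem_univ, true_and, Finset.mem_union]
        constructor
        · intro h
          by_contra hc
          push_neg at hc
          exact h ⟨fun heq => hc.1 (heq ▸ Sym2.mem_mk_left a b), fun w hw => by
            rcases Sym2.mem_iff.1 hw with rfl | rfl
            · exact hc.1
            · exact hc.2⟩
        · rintro (h | h) ⟨hne, hall⟩
          · exact hall a (Sym2.mem_mk_left a b) h
          · exact hall b (Sym2.mem_mk_right a b) h
      have hinter : (univ.filter (fun f : G.edgeSet => a ∈ f.1)) ∩
          (univ.filter (fun f : G.edgeSet => b ∈ f.1)) = {(⟨s(a,b), he⟩ : G.edgeSet)} := by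
        ext f
        simp only [Finset.mem_inter, Finset.mem_filter, Finset.mem_univ, true_and,
          Finset.mem_singleton]
        constructor
        · rintro ⟨ha, hb⟩
          exact Subtype.ext ((Sym2.mem_and_mem_iff hab).1 ⟨ha, hb⟩)
        · rintro rfl
          simp
      have hunion := Finset.card_union_add_card_inter
        (univ.filter (fun f : G.edgeSet => a ∈ f.1))
        (univ.filter (fun f : G.edgeSet => b ∈ f.1))
      rw [hinter] at hunion
      have hca := card_filter_mem G a
      have hcb := card_filter_mem G b
      rw [Fintype.card_subtype] at hca hcb
      rw [hfilt]
      simp only [Finset.card_singleton] at hunion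
      omega
    omega
  omega
lemma sum_lift_eq_M1 :
    ∑ e ∈ G.edgeFinset,
      Sym2.lift ⟨fun u v => G.degree u + G.degree v, fun u v => by simp [Nat.add_comm]⟩ e
      = M1 G := by
  classical
  have step : ∀ e ∈ G.edgeFinset,
      Sym2.lift ⟨fun u v => G.degree u + G.degree v, fun u v => by simp [Nat.add_comm]⟩ e
      = ∑ v, if v ∈ e then G.degree v else 0 := by
    intro e he
    induction e with
    | _ a b =>
      have hab : a ≠ b := (SimpleGraph.mem_edgeFinset.1 he |> G.mem_edgeSet.1).ne
      rw [Sym2.lift_mk]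
      rw [← Finset.sum_filter]
      have : (univ.filter (fun v : V => v ∈ s(a,b))) = {a, b} := by
        ext v; simp [Sym2.mem_iff]
      rw [this, Finset.sum_pair hab]
  rw [Finset.sum_congr rfl step, Finset.sum_comm]
  unfold M1
  refine Finset.sum_congr rfl fun v _ => ?_
  rw [← Finset.sum_filter, ← SimpleGraph.incidenceFinset_eq_filter, Finset.sum_const,
    SimpleGraph.card_incidenceFinset_eq_degree, smul_eq_mul, sq]

lemma deg_inr_ge (a b : V) (he : s(a,b) ∈ G.edgeSet) :
    Fintype.card V ≤ (Gmmm G).degree (Sum.inr ⟨s(a,b), he⟩) + 2 := by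
  classical
  have hab : a ≠ b := (G.mem_edgeSet.1 he).ne
  have hdeg : (Gmmm G).degree (Sum.inr ⟨s(a,b), he⟩) =
      Fintype.card {v : V // v ∉ s(a,b)} +
      Fintype.card {f : G.edgeSet // coshareRel s(a,b) f.1} := by
    rw [← SimpleGraph.card_neighborSet_eq_degree]
    refine (Fintype.card_congr'
      (β := {c // (Gmmm G).Adj (Sum.inr ⟨s(a,b), he⟩) c}) rfl).trans ?_
    rw [Fintype.card_congr
      (Equiv.subtypeSum (p := fun c => (Gmmm G).Adj (Sum.inr ⟨s(a,b), he⟩) c)),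
      Fintype.card_sum]
    congr 1 <;> exact Fintype.card_congr' rfl
  have h1 : Fintype.card {v : V // v ∉ s(a,b)} + 2 = Fintype.card V := by
    have hsplit := card_split' (fun v : V => v ∈ s(a,b))
      (fun v : V => v ∉ s(a,b)) (fun x => Iff.rfl)
    beta_reduce at hsplit
    have hc : Fintype.card {v : V // v ∈ s(a,b)} = 2 := by
      rw [Fintype.card_subtype]
      have : (univ.filter (fun v : V => v ∈ s(a,b))) = {a, b} := by
        ext v; simp [Sym2.mem_iff]
      rw [this, Finset.card_insert_of_notMem (by simp [hab]), Finset.card_singleton]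
    omega
  omega

end Aux
lemma amgm_strict {ι : Type*} (s : Finset ι) (f : ι → ℝ) (hf : ∀ i ∈ s, 0 ≤ f i)
    (hne : ∃ i ∈ s, ∃ j ∈ s, f i ≠ f j) :
    ∏ i ∈ s, f i < ((∑ i ∈ s, f i) / s.card) ^ s.card := by
  obtain ⟨i, hi, j, hj, hij⟩ := hne
  have hcard : 0 < (s.card : ℝ) := by
    have : 0 < s.card := Finset.card_pos.2 ⟨i, hi⟩
    exact_mod_cast this
  have hpos : ∃ k ∈ s, 0 < f k := by
    rcases (hf i hi).lt_or_eq with h | h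
    · exact ⟨i, hi, h⟩
    · refine ⟨j, hj, lt_of_le_of_ne (hf j hj) ?_⟩
      intro h'; exact hij (by rw [← h, ← h'])
  have hsum : 0 < ∑ i ∈ s, f i := Finset.sum_pos' hf hpos
  have havg : 0 < (∑ i ∈ s, f i) / s.card := div_pos hsum hcard
  by_cases hz : ∃ k ∈ s, f k = 0
  · obtain ⟨k, hk, hk0⟩ := hz
    rw [Finset.prod_eq_zero hk hk0]
    exact pow_pos havg _
  push_neg at hz
  have hfpos : ∀ k ∈ s, 0 < f k := fun k hk => lt_of_le_of_ne (hf k hk) (Ne.symm (hz k hk))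
  have key := strictConcaveOn_log_Ioi.lt_map_sum (t := s) (w := fun _ => (s.card : ℝ)⁻¹)
    (p := f) (fun k _ => by positivity) (by
      rw [Finset.sum_const, nsmul_eq_mul]
      field_simp) (fun k hk => hfpos k hk) ⟨i, hi, j, hj, hij⟩
  simp only [smul_eq_mul, ← Finset.mul_sum] at key
  rw [← Real.log_prod (s := s) (f := f) (fun k hk => (hfpos k hk).ne')] at key
  have hprod : 0 < ∏ i ∈ s, f i := Finset.prod_pos hfpos
  rw [← Real.log_lt_log_iff hprod (pow_pos havg _), Real.log_pow]
  have : Real.log (∏ i ∈ s, f i) < (s.card : ℝ) * Real.log ((s.card : ℝ)⁻¹ * ∑ i ∈ s, f i) := by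
    calc Real.log (∏ i ∈ s, f i)
        = (s.card : ℝ) * ((s.card : ℝ)⁻¹ * Real.log (∏ i ∈ s, f i)) := by
          field_simp
      _ < (s.card : ℝ) * Real.log ((s.card : ℝ)⁻¹ * ∑ i ∈ s, f i) := by
          exact mul_lt_mul_of_pos_left key hcard
  rwa [inv_mul_eq_div] at this

lemma amgm {ι : Type*} (s : Finset ι) (hs : s.Nonempty) (f : ι → ℝ) (hf : ∀ i ∈ s, 0 ≤ f i) :
    (∏ i ∈ s, f i ≤ ((∑ i ∈ s, f i) / s.card) ^ s.card) ∧
      ((∏ i ∈ s, f i = ((∑ i ∈ s, f i) / s.card) ^ s.card) ↔ ∀ i ∈ s, ∀ j ∈ s, f i = f j) := by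
  by_cases hc : ∀ i ∈ s, ∀ j ∈ s, f i = f j
  · obtain ⟨i0, hi0⟩ := hs
    have hsum : ∑ i ∈ s, f i = s.card * f i0 := by
      rw [Finset.sum_congr rfl (fun i hi => hc i hi i0 hi0), Finset.sum_const, nsmul_eq_mul]
    have hprod : ∏ i ∈ s, f i = f i0 ^ s.card := by
      rw [Finset.prod_congr rfl (fun i hi => hc i hi i0 hi0), Finset.prod_const]
    have hcard : (s.card : ℝ) ≠ 0 := by
      have : 0 < s.card := Finset.card_pos.2 ⟨i0, hi0⟩
      exact_mod_cast this.ne'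
    have heq : ∏ i ∈ s, f i = ((∑ i ∈ s, f i) / s.card) ^ s.card := by
      rw [hsum, hprod, mul_comm, mul_div_assoc, div_self hcard, mul_one]
    exact ⟨heq.le, iff_of_true heq hc⟩
  · push_neg at hc
    have h := amgm_strict s f hf ⟨hc.choose, hc.choose_spec.1, hc.choose_spec.2.choose,
      hc.choose_spec.2.choose_spec.1, hc.choose_spec.2.choose_spec.2⟩
    refine ⟨h.le, iff_of_false h.ne ?_⟩
    push_neg
    exact ⟨hc.choose, hc.choose_spec.1, hc.choose_spec.2.choose,
      hc.choose_spec.2.choose_spec.1, hc.choose_spec.2.choose_spec.2⟩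

set_option maxHeartbeats 1000000 in
theorem stmt_7 (G : SimpleGraph V) [DecidableRel G.Adj]
    (hn : 1 ≤ Fintype.card V)
    (hm : 1 ≤ G.edgeFinset.card) :
    (NK (Gmmm G) : ℝ) ≤ (((G.edgeFinset.card : ℝ) + Fintype.card V - 1) - 4 * G.edgeFinset.card / Fintype.card V) ^ Fintype.card V * (((G.edgeFinset.card : ℝ) + Fintype.card V - 1) - (M1 G : ℝ) / G.edgeFinset.card) ^ G.edgeFinset.card ∧
      ((NK (Gmmm G) : ℝ) = (((G.edgeFinset.card : ℝ) + Fintype.card V - 1) - 4 * G.edgeFinset.card / Fintype.card V) ^ Fintype.card V * (((G.edgeFinset.card : ℝ) + Fintype.card V - 1) - (M1 G : ℝ) / G.edgeFinset.card) ^ G.edgeFinset.card ↔ (∃ r, G.IsRegularOfDegree r)) := by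
  classical
  have hNV : Nonempty V := Fintype.card_pos_iff.1 hn
  have hNE : Nonempty G.edgeSet := by
    refine Fintype.card_pos_iff.1 ?_
    rw [card_edge_subtype]
    omega
  have hn0 : (0:ℝ) < Fintype.card V := by exact_mod_cast hn
  have hm0 : (0:ℝ) < G.edgeFinset.card := by exact_mod_cast hm
  set A : ℝ := ((G.edgeFinset.card : ℝ) + Fintype.card V - 1) -
      4 * G.edgeFinset.card / Fintype.card V with hA_def
  set B : ℝ := ((G.edgeFinset.card : ℝ) + Fintype.card V - 1) -
      (M1 G : ℝ) / G.edgeFinset.card with hB_def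
  set x : V → ℝ := fun v => ((Gmmm G).degree (Sum.inl v) : ℝ) with hx_def
  set y : G.edgeSet → ℝ := fun e => ((Gmmm G).degree (Sum.inr e) : ℝ) with hy_def
  have hxv : ∀ v : V, x v =
      ((G.edgeFinset.card : ℝ) + Fintype.card V - 1) - 2 * G.degree v := by
    intro v
    have h := deg_inl G v
    have h' := congrArg (Nat.cast (R := ℝ)) h
    push_cast at h'
    rw [hx_def]
    linarith
  have hyab : ∀ (a b : V) (he : s(a,b) ∈ G.edgeSet), y ⟨s(a,b), he⟩ =
      ((G.edgeFinset.card : ℝ) + Fintype.card V - 1) - (G.degree a + G.degree b) := by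
    intro a b he
    have h := deg_inr G a b he
    have h' := congrArg (Nat.cast (R := ℝ)) h
    push_cast at h'
    rw [hy_def]
    linarith
  have hye : ∀ e : G.edgeSet, y e =
      ((G.edgeFinset.card : ℝ) + Fintype.card V - 1) -
      (Sym2.lift ⟨fun u v => G.degree u + G.degree v,
        fun u v => by simp [Nat.add_comm]⟩ e.1 : ℕ) := by
    intro e
    obtain ⟨ab, he⟩ := e
    induction ab with
    | _ a b =>
      rw [hyab a b he, Sym2.lift_mk]
      push_cast
      ring
  have hNK : (NK (Gmmm G) : ℝ) = (∏ v, x v) * (∏ e : G.edgeSet, y e) := by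
    rw [NK, Nat.cast_prod, Fintype.prod_sum_type]
  -- sums
  have hsx : ∑ v, x v = (Fintype.card V : ℝ) *
      ((G.edgeFinset.card : ℝ) + Fintype.card V - 1) - 4 * G.edgeFinset.card := by
    rw [Finset.sum_congr rfl (fun v _ => hxv v), Finset.sum_sub_distrib,
      Finset.sum_const, Finset.card_univ, ← Finset.mul_sum]
    have hd : ∑ v, (G.degree v : ℝ) = 2 * G.edgeFinset.card := by
      have := G.sum_degrees_eq_twice_card_edges
      exact_mod_cast congrArg (Nat.cast (R := ℝ)) this
    rw [hd]
    push_cast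
    try ring
  have hM : ∑ e : G.edgeSet, ((Sym2.lift ⟨fun u v => G.degree u + G.degree v,
      fun u v => by simp [Nat.add_comm]⟩ e.1 : ℕ) : ℝ) = (M1 G : ℝ) := by
    have h1 := Finset.sum_set_coe (s := G.edgeSet)
      (f := fun z => ((Sym2.lift ⟨fun u v => G.degree u + G.degree v,
        fun u v => by simp [Nat.add_comm]⟩ z : ℕ) : ℝ))
    rw [h1]
    rw [show G.edgeSet.toFinset = G.edgeFinset from rfl, ← Nat.cast_sum, sum_lift_eq_M1]
  have hsy : ∑ e : G.edgeSet, y e = (G.edgeFinset.card : ℝ) *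
      ((G.edgeFinset.card : ℝ) + Fintype.card V - 1) - (M1 G : ℝ) := by
    rw [Finset.sum_congr rfl (fun e _ => hye e), Finset.sum_sub_distrib,
      Finset.sum_const, Finset.card_univ, card_edge_subtype, hM]
    push_cast
    ring
  have hA : (∑ v, x v) / ((Finset.univ : Finset V).card : ℝ) = A := by
    rw [Finset.card_univ, hsx, div_eq_iff hn0.ne', hA_def, sub_mul,
      div_mul_cancel₀ _ hn0.ne']
    ring
  have hB : (∑ e : G.edgeSet, y e) / ((Finset.univ : Finset G.edgeSet).card : ℝ) = B := by
    rw [Finset.card_univ, card_edge_subtype, hsy, div_eq_iff hm0.ne', hB_def, sub_mul,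
      div_mul_cancel₀ _ hm0.ne']
    ring
  have hxnn : ∀ v ∈ (Finset.univ : Finset V), 0 ≤ x v := fun v _ => Nat.cast_nonneg _
  have hynn : ∀ e ∈ (Finset.univ : Finset G.edgeSet), 0 ≤ y e := fun e _ => Nat.cast_nonneg _
  have H1 := amgm Finset.univ Finset.univ_nonempty x hxnn
  have H2 := amgm Finset.univ Finset.univ_nonempty y hynn
  rw [hA, Finset.card_univ] at H1
  rw [hB, Finset.card_univ, card_edge_subtype] at H2
  have hP1 : 0 ≤ ∏ v, x v := Finset.prod_nonneg hxnn
  have hP2 : 0 ≤ ∏ e : G.edgeSet, y e := Finset.prod_nonneg hynn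
  have hA0 : 0 ≤ A := by
    rw [← hA]
    exact div_nonneg (Finset.sum_nonneg hxnn) (Nat.cast_nonneg _)
  have hB0 : 0 ≤ B := by
    rw [← hB]
    exact div_nonneg (Finset.sum_nonneg hynn) (Nat.cast_nonneg _)
  constructor
  · rw [hNK]
    exact mul_le_mul H1.1 H2.1 hP2 (pow_nonneg hA0 _)
  constructor
  · -- equality implies regular
    intro h
    have hdd : ∀ v w : V, G.degree v = G.degree w := by
      by_contra hcon
      push_neg at hcon
      obtain ⟨v, w, hvw⟩ := hcon
      have hxne : x v ≠ x w := by
        rw [hxv v, hxv w]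
        intro hh
        apply hvw
        have : (G.degree v : ℝ) = G.degree w := by linarith
        exact_mod_cast this
      have hlt : (∏ v, x v) < A ^ Fintype.card V := by
        have := amgm_strict Finset.univ x hxnn
          ⟨v, Finset.mem_univ v, w, Finset.mem_univ w, hxne⟩
        rwa [hA, Finset.card_univ] at this
      rcases hB0.lt_or_eq with hBpos | hBzero
      · have h1 : (∏ v, x v) * (∏ e : G.edgeSet, y e) ≤
            (∏ v, x v) * B ^ G.edgeFinset.card :=
          mul_le_mul_of_nonneg_left H2.1 hP1
        have h2 : (∏ v, x v) * B ^ G.edgeFinset.card <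
            A ^ Fintype.card V * B ^ G.edgeFinset.card :=
          mul_lt_mul_of_pos_right hlt (pow_pos hBpos _)
        rw [hNK] at h
        linarith
      · -- B = 0 : all y vanish, forcing |V| = 2 and G = K2, contradiction
        exfalso
        have hsumy0 : ∑ e : G.edgeSet, y e = 0 := by
          have h0 : (∑ e : G.edgeSet, y e) /
              (((Finset.univ : Finset G.edgeSet).card : ℕ) : ℝ) = 0 := by
            rw [hB, ← hBzero]
          rcases div_eq_zero_iff.1 h0 with h' | h'
          · exact h'
          · rw [Finset.card_univ, card_edge_subtype] at h'
            exact absurd h' hm0.ne'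
        have hy0 : ∀ e ∈ (Finset.univ : Finset G.edgeSet), y e = 0 :=
          (Finset.sum_eq_zero_iff_of_nonneg hynn).1 hsumy0
        obtain ⟨e0⟩ := hNE
        obtain ⟨ab, he0⟩ := e0
        induction ab with
        | _ a b =>
          have hadj : G.Adj a b := G.mem_edgeSet.1 he0
          have hab : a ≠ b := hadj.ne
          have hy0e : ((Gmmm G).degree (Sum.inr ⟨s(a,b), he0⟩) : ℝ) = 0 :=
            hy0 ⟨s(a,b), he0⟩ (Finset.mem_univ _)
          have hdeg0 : (Gmmm G).degree (Sum.inr ⟨s(a,b), he0⟩) = 0 := by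
            exact_mod_cast hy0e
          have hge := deg_inr_ge G a b he0
          have h2le : 2 ≤ Fintype.card V :=
            Fintype.one_lt_card_iff_nontrivial.2 ⟨⟨a, b, hab⟩⟩
          have hn2 : Fintype.card V = 2 := by omega
          have huniv : ({a, b} : Finset V) = Finset.univ := by
            apply Finset.eq_of_subset_of_card_le (Finset.subset_univ _)
            rw [Finset.card_univ, hn2, Finset.card_insert_of_notMem (by simp [hab]),
              Finset.card_singleton]
          have hdeg1 : ∀ u : V, G.degree u = 1 := by
            intro u
            have hu : u = a ∨ u = b := by
              have : u ∈ ({a, b} : Finset V) := huniv ▸ Finset.mem_univ u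
              simpa using this
            have hlt2 : G.degree u < 2 := hn2 ▸ G.degree_lt_card_verts u
            have hpos : 0 < G.degree u := by
              rw [G.degree_pos_iff_exists_adj]
              rcases hu with rfl | rfl
              · exact ⟨b, hadj⟩
              · exact ⟨a, hadj.symm⟩
            omega
          exact hvw (by rw [hdeg1 v, hdeg1 w])
    obtain ⟨v0⟩ := hNV
    exact ⟨G.degree v0, fun v => hdd v v0⟩
  · -- regular implies equality
    rintro ⟨r, hr⟩
    have hxconst : ∀ i ∈ (Finset.univ : Finset V), ∀ j ∈ (Finset.univ : Finset V),
        x i = x j := by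
      intro i _ j _
      rw [hxv i, hxv j, hr i, hr j]
    have hyconst : ∀ e ∈ (Finset.univ : Finset G.edgeSet),
        ∀ f ∈ (Finset.univ : Finset G.edgeSet), y e = y f := by
      have hyr : ∀ e : G.edgeSet, y e =
          ((G.edgeFinset.card : ℝ) + Fintype.card V - 1) - 2 * r := by
        intro e
        obtain ⟨ab, he⟩ := e
        induction ab with
        | _ a b =>
          rw [hyab a b he, hr a, hr b]
          ring
      intro e _ f _
      rw [hyr e, hyr f]
    rw [hNK, H1.2.2 hxconst, H2.2.2 hyconst]
end

section
/- Let G be an r-regular finite simple graph with n vertices and m edges. Then NK(G^{--+}) = (n-1)^n · (m+3-2r)^m. -/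
open Finset

variable {V : Type*}

variable [Fintype V] [DecidableEq V]

/-- The total transformation graph `G^{--+}`. -/
abbrev Gmmp (G : SimpleGraph V) [DecidableRel G.Adj] : SimpleGraph (V ⊕ G.edgeSet) :=
  transGraph G (coAdj G) coshareRel (fun u e => u ∈ e)
    (coAdj_symm G) (coAdj_irrefl G) coshareRel_symm coshareRel_irrefl


lemma card_coAdj (G : SimpleGraph V) [DecidableRel G.Adj] (u : V) :
    Fintype.card {v : V // coAdj G u v} = Fintype.card V - 1 - G.degree u := by
  rw [Fintype.card_subtype]
  have h : Finset.univ.filter (fun v => coAdj G u v)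
      = Finset.univ \ insert u (G.neighborFinset u) := by
    ext v
    simp only [Finset.mem_filter, Finset.mem_univ, true_and, Finset.mem_sdiff,
      Finset.mem_insert, SimpleGraph.mem_neighborFinset, coAdj]
    constructor
    · rintro ⟨h1, h2⟩ (h3 | h3)
      · exact h1 h3.symm
      · exact h2 h3
    · intro h
      exact ⟨fun h' => h (Or.inl h'.symm), fun h' => h (Or.inr h')⟩
  rw [h, Finset.card_sdiff_of_subset (Finset.subset_univ _), Finset.card_insert_of_notMem
    (by simp), Finset.card_univ, SimpleGraph.card_neighborFinset_eq_degree]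
  omega

lemma card_inc (G : SimpleGraph V) [DecidableRel G.Adj] (u : V) :
    Fintype.card {e : G.edgeSet // u ∈ e.1} = G.degree u := by
  rw [← SimpleGraph.card_incidenceFinset_eq_degree, SimpleGraph.incidenceFinset,
    Set.toFinset_card]
  exact Fintype.card_congr
    { toFun := fun e => ⟨e.1.1, e.1.2, e.2⟩
      invFun := fun e => ⟨⟨e.1, e.2.1⟩, e.2.2⟩
      left_inv := fun e => rfl
      right_inv := fun e => rfl }

lemma degree_inl (G : SimpleGraph V) [DecidableRel G.Adj] (u : V) :
    (Gmmp G).degree (Sum.inl u) = Fintype.card V - 1 := by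
  rw [← SimpleGraph.card_neighborSet_eq_degree]
  have hcard : Fintype.card ((Gmmp G).neighborSet (Sum.inl u))
      = Fintype.card {v : V // coAdj G u v} + Fintype.card {e : G.edgeSet // u ∈ e.1} := by
    rw [← Fintype.card_sum]
    exact Fintype.card_congr (Equiv.subtypeSum (p := fun y => (Gmmp G).Adj (Sum.inl u) y))
  rw [hcard, card_coAdj, card_inc]
  have h1 : G.degree u < Fintype.card V := G.degree_lt_card_verts u
  omega

lemma card_coshare (G : SimpleGraph V) [DecidableRel G.Adj] {a b : V} (hab : G.Adj a b) :
    (G.edgeFinset.filter (fun f => coshareRel s(a, b) f)).card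
      = G.edgeFinset.card + 1 - (G.degree a + G.degree b)
      ∧ G.degree a + G.degree b ≤ G.edgeFinset.card + 1 := by
  classical
  have hne : a ≠ b := G.ne_of_adj hab
  have hfilter : G.edgeFinset.filter (fun f => coshareRel s(a, b) f)
      = G.edgeFinset \ (G.incidenceFinset a ∪ G.incidenceFinset b) := by
    ext f
    simp only [Finset.mem_filter, Finset.mem_sdiff, Finset.mem_union,
      SimpleGraph.mem_incidenceFinset, SimpleGraph.incidenceSet, Set.mem_setOf_eq,
      SimpleGraph.mem_edgeFinset, coshareRel]
    constructor
    · rintro ⟨hf, hne', hsh⟩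
      refine ⟨hf, ?_⟩
      rintro (⟨_, ha⟩ | ⟨_, hb⟩)
      · exact hsh a (by simp) ha
      · exact hsh b (by simp) hb
    · rintro ⟨hf, h⟩
      refine ⟨hf, ?_, ?_⟩
      · rintro rfl
        exact h (Or.inl ⟨hf, by simp⟩)
      · intro w hw hwf
        rw [Sym2.mem_iff] at hw
        rcases hw with rfl | rfl
        · exact h (Or.inl ⟨hf, hwf⟩)
        · exact h (Or.inr ⟨hf, hwf⟩)
  have hinter : G.incidenceFinset a ∩ G.incidenceFinset b = {s(a, b)} := by
    ext f
    simp only [Finset.mem_inter, SimpleGraph.mem_incidenceFinset, SimpleGraph.incidenceSet,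
      Set.mem_setOf_eq, Finset.mem_singleton]
    constructor
    · rintro ⟨⟨_, ha⟩, ⟨_, hb⟩⟩
      exact (Sym2.mem_and_mem_iff hne).mp ⟨ha, hb⟩
    · rintro rfl
      exact ⟨⟨hab, by simp⟩, ⟨hab, by simp⟩⟩
  have hsub : G.incidenceFinset a ∪ G.incidenceFinset b ⊆ G.edgeFinset := by
    intro f hf
    rw [SimpleGraph.mem_edgeFinset]
    rcases Finset.mem_union.mp hf with h | h <;>
    · rw [SimpleGraph.mem_incidenceFinset] at h
      exact h.1
  have hcardu : (G.incidenceFinset a ∪ G.incidenceFinset b).card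
      = G.degree a + G.degree b - 1 := by
    have := Finset.card_union_add_card_inter (G.incidenceFinset a) (G.incidenceFinset b)
    rw [hinter] at this
    simp only [Finset.card_singleton] at this
    rw [SimpleGraph.card_incidenceFinset_eq_degree, SimpleGraph.card_incidenceFinset_eq_degree]
      at this
    omega
  have hle : (G.incidenceFinset a ∪ G.incidenceFinset b).card ≤ G.edgeFinset.card :=
    Finset.card_le_card hsub
  have hd1 : 1 ≤ G.degree a := by
    rw [← SimpleGraph.card_neighborFinset_eq_degree]
    exact Finset.card_pos.mpr ⟨b, by simpa using hab⟩
  rw [hcardu] at hle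
  constructor
  · rw [hfilter, Finset.card_sdiff_of_subset hsub, hcardu]
    omega
  · omega

lemma degree_inr (G : SimpleGraph V) [DecidableRel G.Adj] (r : ℕ)
    (hreg : G.IsRegularOfDegree r) (e : G.edgeSet) :
    (Gmmp G).degree (Sum.inr e) = G.edgeFinset.card + 3 - 2 * r := by
  obtain ⟨e, he⟩ := e
  induction e using Sym2.ind with
  | _ a b =>
  have hab : G.Adj a b := he
  have hne : a ≠ b := G.ne_of_adj hab
  rw [← SimpleGraph.card_neighborSet_eq_degree]
  have hcard : Fintype.card ((Gmmp G).neighborSet (Sum.inr ⟨s(a,b), he⟩))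
      = Fintype.card {v : V // v ∈ s(a,b)}
        + Fintype.card {f : G.edgeSet // coshareRel s(a,b) f.1} := by
    rw [← Fintype.card_sum]
    refine Fintype.card_congr ?_
    exact (Equiv.subtypeSum (p := fun y => (Gmmp G).Adj (Sum.inr ⟨s(a,b), he⟩) y)).trans
      (Equiv.sumCongr (Equiv.refl _) (Equiv.refl _))
  rw [hcard]
  have h2 : Fintype.card {v : V // v ∈ s(a,b)} = 2 := by
    rw [Fintype.card_subtype]
    have : Finset.univ.filter (fun v => v ∈ s(a,b)) = {a, b} := by
      ext v; simp [Sym2.mem_iff]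
    rw [this, Finset.card_insert_of_notMem (by simpa using hne), Finset.card_singleton]
  have h3 : Fintype.card {f : G.edgeSet // coshareRel s(a,b) f.1}
      = G.edgeFinset.card + 1 - (G.degree a + G.degree b) := by
    rw [← (card_coshare G hab).1]
    rw [Fintype.card_congr (Equiv.subtypeSubtypeEquivSubtypeInter
      (fun x => x ∈ G.edgeSet) (fun x => coshareRel s(a,b) x)), Fintype.card_subtype]
    congr 1
    ext f
    simp [SimpleGraph.mem_edgeFinset, and_comm]
  have hd1 : 1 ≤ G.degree a := by
    rw [← SimpleGraph.card_neighborFinset_eq_degree]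
    exact Finset.card_pos.mpr ⟨b, by simpa using hab⟩
  have hle := (card_coshare G hab).2
  rw [hreg a, hreg b] at hle h3
  rw [h2, h3]
  omega

theorem stmt_12 (G : SimpleGraph V) [DecidableRel G.Adj]
    (r : ℕ)
    (hreg : G.IsRegularOfDegree r) :
    NK (Gmmp G) = (Fintype.card V - 1) ^ Fintype.card V * (G.edgeFinset.card + 3 - 2 * r) ^ G.edgeFinset.card := by
  classical
  rw [NK, Fintype.prod_sum_type]
  have h1 : ∀ u : V, (Gmmp G).degree (Sum.inl u) = Fintype.card V - 1 := degree_inl G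
  have h2 : ∀ e : G.edgeSet, (Gmmp G).degree (Sum.inr e)
      = G.edgeFinset.card + 3 - 2 * r := degree_inr G r hreg
  simp only [h1, h2, Finset.prod_const, Finset.card_univ]
  congr 1
  rw [SimpleGraph.edgeFinset, Set.toFinset_card]
end
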